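/- Summing over all roots is a morphism from the tree insertion operad to the pre-Lie (rooted tree) operad: let V₁, V₂ be disjoint finite sets with * ∈ V₁, and let t₁, t₂ be trees on V₁, V₂ respectively. Define ψ(t) = Σ_{r ∈ V} (t, r) for a tree t on V, extended linearly. Then ψ(t₁ ∘_* t₂) = ψ(t₁) ∘_* ψ(t₂), where on the left ∘_* is the (unrooted) graph insertion of trees and on the right ∘_* is the rooted insertion of rooted trees, both extended bilinearly; the left-hand side makes sense because every graph in the support of t₁ ∘_* t₂ is a tree. (This is the proposition that ψ is a monomorphism of operads from the operad of trees into the pre-Lie operad.) -/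

import Mathlib

/-!
Common framework: a simple graph on a finite vertex set `V ⊆ α` is a finite set of
unordered pairs (`Sym2 α`) of distinct elements of `V`.  The insertion
`g₁ ∘_star g₂` is an element of the free `ℚ`-module `Finset (Sym2 α) →₀ ℚ`
on the set of edge sets.
-/

open scoped Classical

variable {α : Type*} [DecidableEq α]

/-- The finite edge set `g` is a simple graph on the vertex set `V`. -/
def IsGraphOn (V : Finset α) (g : Finset (Sym2 α)) : Prop :=
  ∀ e ∈ g, ¬ e.IsDiag ∧ ∀ v ∈ e, v ∈ V

/-- The two endpoints of an unordered pair, as a `Finset`. -/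
def sym2Finset : Sym2 α → Finset α :=
  Sym2.lift ⟨fun a b => {a, b}, by intro a b; simp [Finset.pair_comm]⟩

/-- Neighbours of `x` in the edge set `g`. -/
def nbrs (g : Finset (Sym2 α)) (x : α) : Finset α :=
  (g.biUnion sym2Finset).filter fun v => s(x, v) ∈ g

/-- Remove the vertex `x` (and all incident edges) from the edge set `g`. -/
def delG (g : Finset (Sym2 α)) (x : α) : Finset (Sym2 α) :=
  g.filter fun e => x ∉ e

/-- The edges `{v, f v}` obtained from a reconnection map `f : C → V₂`. -/
def newEdges (C V₂ : Finset α) (f : {v // v ∈ C} → {w // w ∈ V₂}) : Finset (Sym2 α) :=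
  Finset.univ.image fun v : {v // v ∈ C} => s(v.1, (f v).1)

/-- Insertion `g₁ ∘_star g₂` of a graph `g₂` on the vertex set `V₂` into a graph `g₁`:
the sum, over all maps `f` from the neighbours of `star` in `g₁` to `V₂`, of the graph
obtained by deleting `star` from `g₁`, adding `g₂`, and reconnecting along `f`. -/
noncomputable def ins (V₂ : Finset α) (star : α) (g₁ g₂ : Finset (Sym2 α)) :
    Finset (Sym2 α) →₀ ℚ :=
  ∑ f : ({v // v ∈ nbrs g₁ star} → {w // w ∈ V₂}),
    Finsupp.single (delG g₁ star ∪ g₂ ∪ newEdges (nbrs g₁ star) V₂ f) 1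

/-- Bilinear extension of the insertion to the free module on graphs. -/
noncomputable def insM (V₂ : Finset α) (star : α) (x y : Finset (Sym2 α) →₀ ℚ) :
    Finset (Sym2 α) →₀ ℚ :=
  x.sum fun g₁ c₁ => y.sum fun g₂ c₂ => (c₁ * c₂) • ins V₂ star g₁ g₂

/-- The simple graph associated with an edge set. -/
def toSG (g : Finset (Sym2 α)) : SimpleGraph α where
  Adj x y := x ≠ y ∧ s(x, y) ∈ g
  symm := by
    refine ⟨fun x y h => ?_⟩
    exact ⟨h.1.symm, by rw [Sym2.eq_swap]; exact h.2⟩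
  loopless := by
    refine ⟨fun x h => ?_⟩
    exact h.1 rfl

/-- The edge set `g` is connected on `V`: any two vertices of `V` are joined by a path. -/
def IsConnOn (V : Finset α) (g : Finset (Sym2 α)) : Prop :=
  ∀ x ∈ V, ∀ y ∈ V, (toSG g).Reachable x y

/-- A tree on `V`: a connected acyclic simple graph on `V`. -/
def IsTreeOn (V : Finset α) (g : Finset (Sym2 α)) : Prop :=
  IsGraphOn V g ∧ IsConnOn V g ∧ (toSG g).IsAcyclic

/-- The neighbours `p` of `star` in `g` such that `r` is reachable from `p` after deleting
`star`.  For a tree `g` and `star ≠ r` this is the singleton consisting of the unique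
neighbour of `star` on the path from `star` to `r`. -/
noncomputable def towards (g : Finset (Sym2 α)) (star r : α) : Finset α :=
  (nbrs g star).filter fun p => (toSG (delG g star)).Reachable p r

/-- Rooted insertion of a rooted tree `t₂` (with vertex set `V₂` and root `t₂.2`)
into a rooted tree `t₁` at the vertex `star`: delete `star`, reconnect the child ends
(neighbours of `star` not towards the root) to arbitrary vertices of `V₂`, and
reconnect the parent end (the neighbour towards the root, when `star ≠ t₁.2`) to the
root of `t₂`; the new root is `t₁.2` unless `star = t₁.2`, in which case it is `t₂.2`. -/
noncomputable def rins (V₂ : Finset α) (star : α)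
    (t₁ t₂ : Finset (Sym2 α) × α) : (Finset (Sym2 α) × α) →₀ ℚ :=
  let C : Finset α :=
    if star = t₁.2 then nbrs t₁.1 star else nbrs t₁.1 star \ towards t₁.1 star t₁.2
  let extra : Finset (Sym2 α) :=
    if star = t₁.2 then ∅ else (towards t₁.1 star t₁.2).image fun p => s(p, t₂.2)
  let r' : α := if star = t₁.2 then t₂.2 else t₁.2
  ∑ f : ({v // v ∈ C} → {w // w ∈ V₂}),
    Finsupp.single (delG t₁.1 star ∪ t₂.1 ∪ newEdges C V₂ f ∪ extra, r') 1

/-- Bilinear extension of the rooted insertion to the free module on rooted graphs. -/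
noncomputable def rinsM (V₂ : Finset α) (star : α)
    (x y : (Finset (Sym2 α) × α) →₀ ℚ) : (Finset (Sym2 α) × α) →₀ ℚ :=
  x.sum fun t₁ c₁ => y.sum fun t₂ c₂ => (c₁ * c₂) • rins V₂ star t₁ t₂

/-- `ψ` on a single graph: the sum of all rootings of the graph at vertices of `V`. -/
noncomputable def psiV (V : Finset α) (g : Finset (Sym2 α)) : (Finset (Sym2 α) × α) →₀ ℚ :=
  ∑ r ∈ V, Finsupp.single (g, r) 1

/-- Linear extension of `ψ` to the free module on graphs, the graphs being regarded as
graphs on the vertex set `V`. -/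
noncomputable def psiL (V : Finset α) (x : Finset (Sym2 α) →₀ ℚ) :
    (Finset (Sym2 α) × α) →₀ ℚ :=
  x.sum fun g c => c • psiV V g


section AuxLemmas

lemma mem_sym2Finset {e : Sym2 α} {v : α} : v ∈ sym2Finset e ↔ v ∈ e := by
  induction e using Sym2.ind with
  | _ a b => simp [sym2Finset]

lemma mem_nbrs {g : Finset (Sym2 α)} {x v : α} : v ∈ nbrs g x ↔ s(x, v) ∈ g := by
  simp only [nbrs, Finset.mem_filter, Finset.mem_biUnion, and_iff_right_iff_imp]
  intro h
  exact ⟨s(x, v), h, by simp [mem_sym2Finset]⟩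

lemma mem_delG {g : Finset (Sym2 α)} {x : α} {e : Sym2 α} :
    e ∈ delG g x ↔ e ∈ g ∧ x ∉ e := by simp [delG]

lemma star_not_mem_support_delG {g : Finset (Sym2 α)} {star : α} :
    ∀ {p r : α} (W : (toSG (delG g star)).Walk p r), p ≠ star → star ∉ W.support
  | p, _, SimpleGraph.Walk.nil, hp => by simp [Ne.symm hp]
  | p, r, @SimpleGraph.Walk.cons _ _ _ b _ h W, hp => by
    have hq : b ≠ star := by
      intro hq
      have h2 := (mem_delG.mp h.2).2
      rw [hq] at h2
      simp at h2
    rw [SimpleGraph.Walk.support_cons, List.mem_cons]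
    push_neg
    exact ⟨Ne.symm hp, star_not_mem_support_delG W hq⟩

lemma edges_into_delG {t₁ : Finset (Sym2 α)} {star : α} {p r : α}
    (q : (toSG t₁).Walk p r) (hq : star ∉ q.support) :
    ∀ e ∈ q.edges, e ∈ (toSG (delG t₁ star)).edgeSet := by
  intro e he
  induction e using Sym2.ind with
  | _ a b =>
    have hab : (toSG t₁).Adj a b := q.edges_subset_edgeSet he
    refine (SimpleGraph.mem_edgeSet _).mpr ⟨hab.1, mem_delG.mpr ⟨hab.2, ?_⟩⟩
    intro hstar_e
    rcases Sym2.mem_iff.mp hstar_e with h1 | h1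
    · exact hq (h1 ▸ SimpleGraph.Walk.fst_mem_support_of_mem_edges q he)
    · exact hq (h1 ▸ SimpleGraph.Walk.snd_mem_support_of_mem_edges q he)

lemma edges_from_delG {t₁ : Finset (Sym2 α)} {star : α} {p r : α}
    (W : (toSG (delG t₁ star)).Walk p r) :
    ∀ e ∈ W.edges, e ∈ (toSG t₁).edgeSet := by
  intro e he
  induction e using Sym2.ind with
  | _ a b =>
    have hab := W.edges_subset_edgeSet he
    exact (SimpleGraph.mem_edgeSet _).mpr ⟨hab.1, (mem_delG.mp hab.2).1⟩

lemma towards_eq_singleton {V₁ : Finset α} {t₁ : Finset (Sym2 α)} (ht₁ : IsTreeOn V₁ t₁)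
    {star r : α} (hstar : star ∈ V₁) (hr : r ∈ V₁) (hne : r ≠ star) :
    ∃ p, towards t₁ star r = {p} := by
  obtain ⟨w⟩ := ht₁.2.1 star hstar r hr
  obtain ⟨W, hWp⟩ := w.toPath
  cases W with
  | nil => exact absurd rfl hne
  | @cons _ p _ h q =>
    rw [SimpleGraph.Walk.cons_isPath_iff] at hWp
    have hp_nbr : p ∈ nbrs t₁ star := mem_nbrs.mpr h.2
    have hreach : (toSG (delG t₁ star)).Reachable p r :=
      ⟨q.transfer _ (edges_into_delG q hWp.2)⟩
    refine ⟨p, Finset.eq_singleton_iff_unique_mem.mpr ⟨?_, ?_⟩⟩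
    · exact Finset.mem_filter.mpr ⟨hp_nbr, hreach⟩
    · intro p' hp'
      rw [towards, Finset.mem_filter] at hp'
      obtain ⟨hp'_nbr, hreach'⟩ := hp'
      have key : ∀ x : α, x ∈ nbrs t₁ star → (toSG (delG t₁ star)).Reachable x r →
          ∃ (A : (toSG t₁).Walk star r), A.IsPath ∧ A.getVert 1 = x := by
        intro x hx hrch
        obtain ⟨Wx, hWx⟩ := hrch.some.toPath
        have hxe : s(star, x) ∈ t₁ := mem_nbrs.mp hx
        have hxne : star ≠ x := by
          intro hxx
          exact (ht₁.1 _ hxe).1 (by rw [hxx]; exact Sym2.mk_isDiag_iff.mpr rfl)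
        have hstar_sup : star ∉ Wx.support :=
          star_not_mem_support_delG Wx (Ne.symm hxne)
        refine ⟨SimpleGraph.Walk.cons (show (toSG t₁).Adj star x from ⟨hxne, hxe⟩) (Wx.transfer _ (edges_from_delG Wx)), ?_, ?_⟩
        · rw [SimpleGraph.Walk.cons_isPath_iff]
          refine ⟨hWx.transfer _, ?_⟩
          rw [SimpleGraph.Walk.support_transfer]
          exact hstar_sup
        · simp [SimpleGraph.Walk.getVert_cons_succ]
      obtain ⟨A, hA, hA1⟩ := key p hp_nbr hreach
      obtain ⟨A', hA', hA1'⟩ := key p' hp'_nbr hreach'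
      have heq := SimpleGraph.isAcyclic_iff_path_unique.mp ht₁.2.2 ⟨A, hA⟩ ⟨A', hA'⟩
      have hAA : A = A' := congrArg Subtype.val heq
      rw [← hA1', ← hAA, hA1]

/-- The reindexing equivalence splitting off the value at `p`. -/
noncomputable def reE (N V₂ : Finset α) (p : α) (hp : p ∈ N) :
    ({v // v ∈ N} → {w // w ∈ V₂}) ≃ ({v // v ∈ N.erase p} → {w // w ∈ V₂}) × {w // w ∈ V₂} where
  toFun f := (fun v => f ⟨v.1, Finset.mem_of_mem_erase v.2⟩, f ⟨p, hp⟩)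
  invFun fw := fun v =>
    if h : v.1 = p then fw.2 else fw.1 ⟨v.1, Finset.mem_erase.mpr ⟨h, v.2⟩⟩
  left_inv f := by
    funext v
    by_cases h : v.1 = p
    · simp only [dif_pos h]
      exact congrArg f (Subtype.ext h.symm)
    · simp only [dif_neg h]
  right_inv fw := by
    obtain ⟨f', w⟩ := fw
    refine Prod.ext ?_ ?_
    · funext v
      have hv : v.1 ≠ p := (Finset.mem_erase.mp v.2).1
      simp only [dif_neg hv]
    · simp

lemma newEdges_reE_symm (N V₂ : Finset α) (p : α) (hp : p ∈ N)
    (f' : {v // v ∈ N.erase p} → {w // w ∈ V₂}) (w : {w // w ∈ V₂}) :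
    newEdges N V₂ ((reE N V₂ p hp).symm (f', w))
      = newEdges (N.erase p) V₂ f' ∪ {s(p, w.1)} := by
  ext e
  simp only [newEdges, reE, Equiv.coe_fn_symm_mk, Finset.mem_union, Finset.mem_image,
    Finset.mem_univ, true_and, Finset.mem_singleton]
  constructor
  · rintro ⟨v, rfl⟩
    by_cases h : v.1 = p
    · right; rw [dif_pos h, h]
    · left; exact ⟨⟨v.1, Finset.mem_erase.mpr ⟨h, v.2⟩⟩, by rw [dif_neg h]⟩
  · rintro (⟨v, rfl⟩ | rfl)
    · refine ⟨⟨v.1, Finset.mem_of_mem_erase v.2⟩, ?_⟩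
      have hv : v.1 ≠ p := (Finset.mem_erase.mp v.2).1
      rw [dif_neg hv]
    · exact ⟨⟨p, hp⟩, by rw [dif_pos rfl]⟩

lemma sum_newEdges_reindex {M : Type*} [AddCommMonoid M] (N V₂ : Finset α) (p : α) (hp : p ∈ N)
    (F : Finset (Sym2 α) → M) :
    ∑ f : ({v // v ∈ N} → {w // w ∈ V₂}), F (newEdges N V₂ f)
      = ∑ r₂ ∈ V₂, ∑ f' : ({v // v ∈ N.erase p} → {w // w ∈ V₂}),
          F (newEdges (N.erase p) V₂ f' ∪ {s(p, r₂)}) := by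
  rw [← Equiv.sum_comp (reE N V₂ p hp).symm (fun f => F (newEdges N V₂ f))]
  rw [Fintype.sum_prod_type]
  rw [Finset.sum_comm]
  rw [← Finset.sum_coe_sort V₂]
  refine Finset.sum_congr rfl fun w _ => Finset.sum_congr rfl fun f' _ => ?_
  rw [newEdges_reE_symm]

lemma sum_of_singles {ι β M : Type*} [AddCommMonoid M] (s : Finset ι) (k : ι → β)
    (h : β → ℚ → M) (h0 : ∀ b, h b 0 = 0)
    (hadd : ∀ b c₁ c₂, h b (c₁ + c₂) = h b c₁ + h b c₂) :
    (∑ i ∈ s, Finsupp.single (k i) (1 : ℚ)).sum h = ∑ i ∈ s, h (k i) 1 := by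
  rw [← Finsupp.sum_finset_sum_index h0 hadd]
  exact Finset.sum_congr rfl fun i _ => Finsupp.sum_single_index (h0 _)

lemma psiL_sum_single {ι : Type*} (V : Finset α) (s : Finset ι) (g : ι → Finset (Sym2 α)) :
    psiL V (∑ i ∈ s, Finsupp.single (g i) 1) = ∑ i ∈ s, psiV V (g i) := by
  unfold psiL
  rw [sum_of_singles s g _ (fun b => by simp) (fun b c₁ c₂ => by rw [add_smul])]
  exact Finset.sum_congr rfl fun i _ => one_smul _ _

lemma rinsM_psiV (V₁ V₂ : Finset α) (star : α) (t₁ t₂ : Finset (Sym2 α)) :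
    rinsM V₂ star (psiV V₁ t₁) (psiV V₂ t₂)
      = ∑ r₁ ∈ V₁, ∑ r₂ ∈ V₂, rins V₂ star (t₁, r₁) (t₂, r₂) := by
  unfold rinsM psiV
  rw [sum_of_singles V₁ (fun r₁ => (t₁, r₁)) _
      (fun b => by simp [Finsupp.sum])
      (fun b c₁ c₂ => by simp [Finsupp.sum, add_mul, add_smul, Finset.sum_add_distrib])]
  refine Finset.sum_congr rfl fun r₁ _ => ?_
  rw [sum_of_singles V₂ (fun r₂ => (t₂, r₂)) _
      (fun b => by simp)
      (fun b c₁ c₂ => by simp [mul_add, add_smul])]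
  refine Finset.sum_congr rfl fun r₂ _ => ?_
  simp

end AuxLemmas

/-- **Summing over all roots is a morphism from the tree insertion operad to the pre-Lie
(rooted tree) operad**: `ψ(t₁ ∘_star t₂) = ψ(t₁) ∘_star ψ(t₂)`, where on the left the
insertion is the (unrooted) graph insertion and on the right the rooted insertion of
rooted trees, both extended bilinearly. -/
theorem psi_is_operad_morphism
    (V₁ V₂ : Finset α) (star : α)
    (hd : Disjoint V₁ V₂) (hstar : star ∈ V₁)
    (t₁ t₂ : Finset (Sym2 α))
    (ht₁ : IsTreeOn V₁ t₁) (ht₂ : IsTreeOn V₂ t₂) :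
    psiL (V₁.erase star ∪ V₂) (ins V₂ star t₁ t₂)
      = rinsM V₂ star (psiV V₁ t₁) (psiV V₂ t₂) := by
  classical
  have hdisj : Disjoint (V₁.erase star) V₂ := hd.mono_left (Finset.erase_subset _ _)
  have hins : ins V₂ star t₁ t₂
      = ∑ f : ({v // v ∈ nbrs t₁ star} → {w // w ∈ V₂}),
          Finsupp.single (delG t₁ star ∪ t₂ ∪ newEdges (nbrs t₁ star) V₂ f) 1 := rfl
  rw [hins, psiL_sum_single, rinsM_psiV, ← Finset.add_sum_erase V₁ _ hstar]
  have hL : ∑ f : ({v // v ∈ nbrs t₁ star} → {w // w ∈ V₂}),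
        psiV (V₁.erase star ∪ V₂) (delG t₁ star ∪ t₂ ∪ newEdges (nbrs t₁ star) V₂ f)
      = (∑ r ∈ V₁.erase star, ∑ f : ({v // v ∈ nbrs t₁ star} → {w // w ∈ V₂}),
            Finsupp.single (delG t₁ star ∪ t₂ ∪ newEdges (nbrs t₁ star) V₂ f, r) 1)
        + ∑ r ∈ V₂, ∑ f : ({v // v ∈ nbrs t₁ star} → {w // w ∈ V₂}),
            Finsupp.single (delG t₁ star ∪ t₂ ∪ newEdges (nbrs t₁ star) V₂ f, r) 1 := by
    unfold psiV
    refine (Finset.sum_congr rfl fun f _ => Finset.sum_union hdisj).trans ?_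
    refine Finset.sum_add_distrib.trans ?_
    congr 1 <;> exact Finset.sum_comm
  rw [hL]
  have hstar_term : ∀ r₂ : α, rins V₂ star (t₁, star) (t₂, r₂)
      = ∑ f : ({v // v ∈ nbrs t₁ star} → {w // w ∈ V₂}),
          Finsupp.single (delG t₁ star ∪ t₂ ∪ newEdges (nbrs t₁ star) V₂ f, r₂) 1 := by
    intro r₂
    simp [rins]
    rw [if_pos rfl]
  have herase_term : ∀ r₁ ∈ V₁.erase star,
      (∑ f : ({v // v ∈ nbrs t₁ star} → {w // w ∈ V₂}),
          Finsupp.single (delG t₁ star ∪ t₂ ∪ newEdges (nbrs t₁ star) V₂ f, r₁) 1)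
        = ∑ r₂ ∈ V₂, rins V₂ star (t₁, r₁) (t₂, r₂) := by
    intro r₁ hr₁
    obtain ⟨hr₁ne, hr₁V⟩ := Finset.mem_erase.mp hr₁
    obtain ⟨p, htw⟩ := towards_eq_singleton ht₁ hstar hr₁V hr₁ne
    have hpN : p ∈ nbrs t₁ star := by
      have : p ∈ towards t₁ star r₁ := by rw [htw]; exact Finset.mem_singleton_self p
      exact (Finset.mem_filter.mp this).1
    have hC : nbrs t₁ star \ towards t₁ star r₁ = (nbrs t₁ star).erase p := by
      rw [htw, Finset.sdiff_singleton_eq_erase]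
    have hne' : ¬ star = r₁ := fun h => hr₁ne h.symm
    have hrins : ∀ r₂ : α, rins V₂ star (t₁, r₁) (t₂, r₂)
        = ∑ f' : ({v // v ∈ (nbrs t₁ star).erase p} → {w // w ∈ V₂}),
            Finsupp.single
              (delG t₁ star ∪ t₂ ∪ (newEdges ((nbrs t₁ star).erase p) V₂ f' ∪ {s(p, r₂)}), r₁)
              1 := by
      intro r₂
      simp [rins, hne', hC, htw, Finset.union_assoc]
      rw [if_neg hne', hC]
    refine Eq.trans (sum_newEdges_reindex (nbrs t₁ star) V₂ p hpN
      (fun G => Finsupp.single (delG t₁ star ∪ t₂ ∪ G, r₁) 1)) ?_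
    exact Finset.sum_congr rfl fun r₂ _ => (hrins r₂).symm
  rw [add_comm]
  congr 1
  · exact Finset.sum_congr rfl fun r₂ _ => (hstar_term r₂).symm
  · exact Finset.sum_congr rfl herase_term
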